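/- In the equal signal strength model with Σ = I_p, for any index j with b_j ≠ 0: |η_j^{(os)}| = √n·|b₀|/σ, and |η_j^{(ts)}| ≤ min{ √(min(n, ñ)/s), √n·|b₀|/σ }, where η_j^{(os)} = √n·b_j/σ and η_j^{(ts)} = √n·b_j / √( (bᵀb + b_j²)·(1 + n/ñ) + σ² ). -/

import Mathlib

open MeasureTheory ProbabilityTheory Filter Matrix Real Topology
open scoped ENNReal NNReal

noncomputable section

namespace ProxyData

def l0 {p : ℕ} (v : Fin p → ℝ) : ℕ := (Function.support v).ncard

def l1 {p : ℕ} (v : Fin p → ℝ) : ℝ := ∑ i, |v i|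

def l2sq {p : ℕ} (v : Fin p → ℝ) : ℝ := ∑ i, (v i) ^ 2

def linf {p : ℕ} (v : Fin p → ℝ) : ℝ := ⨆ i, |v i|

def gaussianVec {p : ℕ} (S : Matrix (Fin p) (Fin p) ℝ) (hS : S.PosSemidef) :
    Measure (Fin p → ℝ) :=
  (Measure.pi fun _ : Fin p => gaussianReal 0 1).map fun z =>
    (hS.1.eigenvectorUnitary.1 * diagonal ((↑) ∘ (√·) ∘ hS.1.eigenvalues) *
      (star hS.1.eigenvectorUnitary : Matrix (Fin p) (Fin p) ℝ)) *ᵥ z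

def EigBounds {p : ℕ} (S : Matrix (Fin p) (Fin p) ℝ) (C₁ : ℝ) : Prop :=
  S.IsSymm ∧ ∀ v : Fin p → ℝ, C₁⁻¹ * l2sq v ≤ v ⬝ᵥ S *ᵥ v ∧ v ⬝ᵥ S *ᵥ v ≤ C₁ * l2sq v

def SubGaussianLaw (ν : Measure ℝ) (K : ℝ) : Prop :=
  ∀ l : ℕ, 1 ≤ l → (∫ x, |x| ^ l ∂ν) ^ ((l : ℝ)⁻¹) ≤ K * Real.sqrt l

def NoiseLaw (ν : Measure ℝ) (σ K : ℝ) : Prop :=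
  IsProbabilityMeasure ν ∧ Integrable (fun x => x) ν ∧ Integrable (fun x => x ^ 2) ν ∧
    (∫ x, x ∂ν) = 0 ∧ (∫ x, x ^ 2 ∂ν) = σ ^ 2 ∧ SubGaussianLaw ν K

abbrev SampleSpace (p n m : ℕ) :=
  (Fin n → Fin p → ℝ) × (Fin n → ℝ) × (Fin m → Fin p → ℝ)

def modelMeasure {p : ℕ} (n m : ℕ) (S : Matrix (Fin p) (Fin p) ℝ) (hS : S.PosSemidef)
    (ν : Measure ℝ) : Measure (SampleSpace p n m) :=
  (Measure.pi fun _ : Fin n => gaussianVec S hS).prod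
    ((Measure.pi fun _ : Fin n => ν).prod (Measure.pi fun _ : Fin m => gaussianVec S hS))

def yVal {p n m : ℕ} (β : Fin p → ℝ) (ω : SampleSpace p n m) (i : Fin n) : ℝ :=
  (∑ j, ω.1 i j * β j) + ω.2.1 i

def Shat {p n m : ℕ} (β : Fin p → ℝ) (ω : SampleSpace p n m) : Fin p → ℝ :=
  fun j => (∑ i, ω.1 i j * yVal β ω i) / n

def SigTilde {p n m : ℕ} (ω : SampleSpace p n m) : Matrix (Fin p) (Fin p) ℝ :=
  fun j k => (∑ i, ω.2.2 i j * ω.2.2 i k) / m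

def gammaNN {p : ℕ} (S : Matrix (Fin p) (Fin p) ℝ) (β : Fin p → ℝ) (σ : ℝ) (n m : ℕ) : ℝ :=
  σ ^ 2 + (β ⬝ᵥ S *ᵥ β) * ((n : ℝ) / m + 1)

def lassoObj {p : ℕ} (A : Matrix (Fin p) (Fin p) ℝ) (s : Fin p → ℝ) (lam : ℝ)
    (b : Fin p → ℝ) : ℝ :=
  (1 / 2) * (b ⬝ᵥ A *ᵥ b) - b ⬝ᵥ s + lam * l1 b

def IsLassoSol {p : ℕ} (A : Matrix (Fin p) (Fin p) ℝ) (s : Fin p → ℝ) (lam : ℝ)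
    (bhat : Fin p → ℝ) : Prop :=
  ∀ b, lassoObj A s lam bhat ≤ lassoObj A s lam b

def DantzigFeas {p : ℕ} (A : Matrix (Fin p) (Fin p) ℝ) (t : Fin p → ℝ) (lam : ℝ)
    (w : Fin p → ℝ) : Prop :=
  linf (fun i => (A *ᵥ w) i - t i) ≤ lam

def IsDantzigSol {p : ℕ} (A : Matrix (Fin p) (Fin p) ℝ) (t : Fin p → ℝ) (lam : ℝ)
    (w : Fin p → ℝ) : Prop :=
  DantzigFeas A t lam w ∧ ∀ w', DantzigFeas A t lam w' → l1 w ≤ l1 w'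

def stdNormalCDF (t : ℝ) : ℝ := (gaussianReal 0 1 (Set.Iic t)).toReal

def BigOP {Ωs : ℕ → Type*} [∀ k, MeasurableSpace (Ωs k)] (μ : ∀ k, Measure (Ωs k))
    (X : ∀ k, Ωs k → ℝ) (r : ℕ → ℝ) : Prop :=
  ∀ ε : ℝ, 0 < ε → ∃ C : ℝ, 0 < C ∧
    ∀ᶠ k in atTop, (μ k {ω | C * r k < |X k ω|}).toReal ≤ ε

def TendstoStdNormal {Ωs : ℕ → Type*} [∀ k, MeasurableSpace (Ωs k)] (μ : ∀ k, Measure (Ωs k))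
    (X : ∀ k, Ωs k → ℝ) : Prop :=
  ∀ t : ℝ, Tendsto (fun k => (μ k {ω | X k ω ≤ t}).toReal) atTop (𝓝 (stdNormalCDF t))

def omegaCol {p : ℕ} (S : Matrix (Fin p) (Fin p) ℝ) (j : Fin p) : Fin p → ℝ := fun i => S⁻¹ i j

def zstat {p n m : ℕ} (S : Matrix (Fin p) (Fin p) ℝ) (β : Fin p → ℝ) (j : Fin p)
    (ω : SampleSpace p n m) : ℝ :=
  omegaCol S j ⬝ᵥ (fun i => Shat β ω i - (S *ᵥ β) i)
    + omegaCol S j ⬝ᵥ ((S - SigTilde ω) *ᵥ β)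

def Vts {p : ℕ} (S : Matrix (Fin p) (Fin p) ℝ) (β : Fin p → ℝ) (σ : ℝ) (n m : ℕ)
    (j : Fin p) : ℝ :=
  S⁻¹ j j * gammaNN S β σ n m / n + (β j) ^ 2 / n + (β j) ^ 2 / m


set_option maxHeartbeats 1000000 in
/-- Corollary 1 of the paper: power truncation in the equal signal
strength model with `Σ = I_p`. If every coordinate of `b` lies in `{−b₀, 0, b₀}`,
`‖b‖₀ = s ≥ 1`, and `b_j ≠ 0`, then `|η_j^{(os)}| = √n·|b₀|/σ` and
`|η_j^{(ts)}| ≤ min{√(min(n,ñ)/s), √n·|b₀|/σ}`. -/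
theorem statement_7 {p : ℕ} (n m : ℕ) (hn : 0 < n) (hm : 0 < m)
    (b : Fin p → ℝ) (b₀ : ℝ) (hb₀ : b₀ ≠ 0) (s : ℕ) (hs : 1 ≤ s)
    (σ : ℝ) (hσ : 0 < σ) (j : Fin p)
    (hmodel : ∀ i, b i = -b₀ ∨ b i = 0 ∨ b i = b₀)
    (hsupp : (Function.support b).ncard = s)
    (hj : b j ≠ 0) :
    |Real.sqrt n * b j / σ| = Real.sqrt n * |b₀| / σ ∧
    |Real.sqrt n * b j /
        Real.sqrt ((b ⬝ᵥ b + (b j) ^ 2) * (1 + (n : ℝ) / m) + σ ^ 2)|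
      ≤ min (Real.sqrt ((min n m : ℝ) / s)) (Real.sqrt n * |b₀| / σ) := by

  -- basic facts
  have hbj : |b j| = |b₀| := by
    rcases hmodel j with h | h | h
    · rw [h, abs_neg]
    · exact absurd h hj
    · rw [h]
  have hB : (0:ℝ) < b₀ ^ 2 := by positivity
  have hbb : b ⬝ᵥ b = s * b₀ ^ 2 := by
    have hterm : ∀ i, b i * b i = if b i ≠ 0 then b₀ ^ 2 else 0 := by
      intro i
      rcases hmodel i with h | h | h <;> simp [h, hb₀] <;> ring
    rw [dotProduct]
    simp_rw [hterm]
    rw [Finset.sum_ite, Finset.sum_const_zero, add_zero, Finset.sum_const, nsmul_eq_mul]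
    congr 1
    rw [← hsupp]
    have : Function.support b = ↑(Finset.univ.filter (fun i => b i ≠ 0)) := by
      ext i; simp [Function.mem_support]
    rw [this, Set.ncard_coe_finset]
  have hbjsq : (b j) ^ 2 = b₀ ^ 2 := by
    rcases hmodel j with h | h | h
    · rw [h]; ring
    · exact absurd h hj
    · rw [h]
  set D : ℝ := (b ⬝ᵥ b + (b j) ^ 2) * (1 + (n : ℝ) / m) + σ ^ 2 with hD
  have hfrac : (0:ℝ) ≤ (n : ℝ) / m := by positivity
  have hDval : D = (s * b₀ ^ 2 + b₀ ^ 2) * (1 + (n : ℝ) / m) + σ ^ 2 := by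
    rw [hD, hbb, hbjsq]
  have hs1 : (1:ℝ) ≤ s := by exact_mod_cast hs
  have hDpos : 0 < D := by rw [hDval]; positivity
  have hsqrtD : 0 < Real.sqrt D := Real.sqrt_pos.mpr hDpos
  have hσleD : σ ≤ Real.sqrt D := by
    rw [show σ = Real.sqrt (σ ^ 2) from (Real.sqrt_sq hσ.le).symm]
    apply Real.sqrt_le_sqrt
    have h1 : (0:ℝ) ≤ (s * b₀ ^ 2 + b₀ ^ 2) * (1 + (n : ℝ) / m) := by positivity
    rw [hDval]; linarith
  have habs : |Real.sqrt n * b j / Real.sqrt D| = Real.sqrt n * |b₀| / Real.sqrt D := by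
    rw [abs_div, abs_mul, abs_of_nonneg (Real.sqrt_nonneg _),
      abs_of_nonneg (Real.sqrt_nonneg _), hbj]
  constructor
  · rw [abs_div, abs_mul, abs_of_nonneg (Real.sqrt_nonneg _), abs_of_pos hσ, hbj]
  · rw [habs]
    apply le_min
    · have hnum : (0:ℝ) ≤ Real.sqrt n * |b₀| / Real.sqrt D := by positivity
      rw [Real.le_sqrt hnum]
      rw [div_pow, mul_pow, Real.sq_sqrt (Nat.cast_nonneg n), sq_abs,
        Real.sq_sqrt hDpos.le]
      rw [div_le_div_iff₀ hDpos (by positivity : (0:ℝ) < s)]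
      rcases le_total (n:ℕ) m with h | h
      · have : min (n:ℝ) (m:ℝ) = n := min_eq_left (by exact_mod_cast h)
        rw [this, hDval]
        have h2 : (0:ℝ) ≤ ((s:ℝ) * b₀ ^ 2 + b₀ ^ 2) * ((n : ℝ) / m) := by positivity
        have hsB : (s:ℝ) * b₀ ^ 2 ≤ (s * b₀ ^ 2 + b₀ ^ 2) * (1 + (n : ℝ) / m) + σ ^ 2 := by
          nlinarith [sq_nonneg σ, h2, hB]
        nlinarith [mul_le_mul_of_nonneg_left hsB (Nat.cast_nonneg n : (0:ℝ) ≤ n)]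
      · have hm' : (m:ℝ) ≤ n := by exact_mod_cast h
        have : min (n:ℝ) (m:ℝ) = m := min_eq_right hm'
        rw [this, hDval]
        have hmpos : (0:ℝ) < m := by exact_mod_cast hm
        have key : (s:ℝ) * b₀ ^ 2 * n ≤ (m:ℝ) * ((s * b₀ ^ 2 + b₀ ^ 2) * (1 + (n : ℝ) / m)) := by
          have : (m:ℝ) * ((s * b₀ ^ 2 + b₀ ^ 2) * (1 + (n : ℝ) / m))
              = (s * b₀ ^ 2 + b₀ ^ 2) * (m + n) := by
            field_simp
          rw [this]
          have h1 : (0:ℝ) ≤ (s:ℝ) * b₀ ^ 2 * m := by positivity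
          have h2 : (0:ℝ) ≤ b₀ ^ 2 * (m:ℝ) := by positivity
          have h3 : (0:ℝ) ≤ b₀ ^ 2 * (n:ℝ) := by positivity
          nlinarith [h1, h2, h3]
        have expand : (m:ℝ) * ((s * b₀ ^ 2 + b₀ ^ 2) * (1 + (n : ℝ) / m) + σ ^ 2)
            = (m:ℝ) * ((s * b₀ ^ 2 + b₀ ^ 2) * (1 + (n : ℝ) / m)) + (m:ℝ) * σ ^ 2 := by
          ring
        rw [expand]
        linarith [key, mul_nonneg hmpos.le (sq_nonneg σ)]
      · exact div_nonneg (le_min (by positivity) (by positivity)) (by positivity)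
    · exact div_le_div_of_nonneg_left (by positivity) hσ hσleD


end ProxyData
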